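/- Let G be a finite graph that is K_3-free, (K_1+2K_2)-free, (K_1+C_5)-free, and C_6-free, and let I be a maximal independent set of G. Then the graph G' obtained by adding a new vertex v' adjacent exactly to the vertices of I is (K_1+2K_2)-free. -/

import Mathlib

/-- The 6-cycle `C₆`. -/
def C6 : SimpleGraph (ZMod 6) :=
  SimpleGraph.fromRel (fun i j => j = i + 1)

/-- The graph `K₁ + 2K₂`: vertex 0 is isolated, with edges 1-2 and 3-4. -/
def K1plus2K2 : SimpleGraph (Fin 5) :=
  SimpleGraph.fromRel (fun i j => (i = 1 ∧ j = 2) ∨ (i = 3 ∧ j = 4))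

/-- The graph `K₁ + C₅`: vertex 0 is isolated and 1,2,3,4,5 form a 5-cycle. -/
def K1plusC5 : SimpleGraph (Fin 6) :=
  SimpleGraph.fromRel (fun i j =>
    (i = 1 ∧ j = 2) ∨ (i = 2 ∧ j = 3) ∨ (i = 3 ∧ j = 4) ∨ (i = 4 ∧ j = 5) ∨ (i = 5 ∧ j = 1))

/-- `I` is an independent set of vertices of `G`. -/
def IsIndep {V : Type*} (G : SimpleGraph V) (I : Set V) : Prop :=
  ∀ x ∈ I, ∀ y ∈ I, ¬ G.Adj x y

/-- The graph obtained from `G` by adding a new vertex (`none`) adjacent exactly to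
the vertices of `I`. -/
def addVertex {V : Type*} (G : SimpleGraph V) (I : Set V) : SimpleGraph (Option V) :=
  SimpleGraph.fromRel (fun a b =>
    (∃ x y, a = some x ∧ b = some y ∧ G.Adj x y) ∨ (a = none ∧ ∃ x ∈ I, b = some x))

private lemma mv0 {α : Type*} (a b c d e f : α) : ![a,b,c,d,e,f] 0 = a := rfl
private lemma mv1 {α : Type*} (a b c d e f : α) : ![a,b,c,d,e,f] 1 = b := rfl
private lemma mv2 {α : Type*} (a b c d e f : α) : ![a,b,c,d,e,f] 2 = c := rfl
private lemma mv3 {α : Type*} (a b c d e f : α) : ![a,b,c,d,e,f] 3 = d := rfl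
private lemma mv4 {α : Type*} (a b c d e f : α) : ![a,b,c,d,e,f] 4 = e := rfl
private lemma mv5 {α : Type*} (a b c d e f : α) : ![a,b,c,d,e,f] 5 = f := rfl

def C6fin : SimpleGraph (Fin 6) :=
  SimpleGraph.fromRel (fun i j => j = i + 1)

lemma c6_adj_all : ∀ a b : ZMod 6, C6fin.Adj a b ↔ C6.Adj a b := by
  intro a b
  exact (SimpleGraph.fromRel_adj (V := Fin 6) _ a b).trans
    (SimpleGraph.fromRel_adj (V := ZMod 6) (fun i j => j = i + 1) a b).symm

def c6Iso : C6 ≃g C6fin :=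
  ⟨⟨fun i : ZMod 6 => (i : Fin 6), fun i : Fin 6 => (i : ZMod 6), fun _ => rfl, fun _ => rfl⟩,
    fun {a b} => c6_adj_all a b⟩

lemma no2K2 {V : Type*} {G : SimpleGraph V} (h : ¬ Nonempty (K1plus2K2 ↪g G))
    (a b c d e : V)
    (neab : a ≠ b)
    (neac : a ≠ c)
    (nead : a ≠ d)
    (neae : a ≠ e)
    (nebd : b ≠ d)
    (nebe : b ≠ e)
    (necd : c ≠ d)
    (nece : c ≠ e)
    (ebc : G.Adj b c)
    (ede : G.Adj d e)
    (nab : ¬ G.Adj a b)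
    (nac : ¬ G.Adj a c)
    (nad : ¬ G.Adj a d)
    (nae : ¬ G.Adj a e)
    (nbd : ¬ G.Adj b d)
    (nbe : ¬ G.Adj b e)
    (ncd : ¬ G.Adj c d)
    (nce : ¬ G.Adj c e)
    : False := by
  have ecb := ebc.symm
  have nebc := G.ne_of_adj ebc
  have necb := G.ne_of_adj ecb
  have eed := ede.symm
  have nede := G.ne_of_adj ede
  have need := G.ne_of_adj eed
  have nba : ¬ G.Adj b a := fun hh => nab hh.symm
  have nca : ¬ G.Adj c a := fun hh => nac hh.symm
  have nda : ¬ G.Adj d a := fun hh => nad hh.symm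
  have nea : ¬ G.Adj e a := fun hh => nae hh.symm
  have ndb : ¬ G.Adj d b := fun hh => nbd hh.symm
  have neb : ¬ G.Adj e b := fun hh => nbe hh.symm
  have ndc : ¬ G.Adj d c := fun hh => ncd hh.symm
  have nec : ¬ G.Adj e c := fun hh => nce hh.symm
  have neba := neab.symm
  have neca := neac.symm
  have neda := nead.symm
  have neea := neae.symm
  have nedb := nebd.symm
  have neeb := nebe.symm
  have nedc := necd.symm
  have neec := nece.symm
  apply h
  refine ⟨⟨⟨![a,b,c,d,e], ?_⟩, ?_⟩⟩
  · intro i j hij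
    fin_cases i <;> fin_cases j <;> simp_all [mv0, mv1, mv2, mv3, mv4, mv5]
  · intro i j
    change G.Adj (![a,b,c,d,e] i) (![a,b,c,d,e] j) ↔ _
    fin_cases i <;> fin_cases j <;>
      simp_all [mv0, mv1, mv2, mv3, mv4, mv5, K1plus2K2, SimpleGraph.fromRel_adj]

lemma noK1C5 {V : Type*} {G : SimpleGraph V} (h : ¬ Nonempty (K1plusC5 ↪g G))
    (a p q r s t : V)
    (neap : a ≠ p)
    (neaq : a ≠ q)
    (near : a ≠ r)
    (neas : a ≠ s)
    (neat : a ≠ t)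
    (nepr : p ≠ r)
    (neps : p ≠ s)
    (neqs : q ≠ s)
    (neqt : q ≠ t)
    (nert : r ≠ t)
    (epq : G.Adj p q)
    (eqr : G.Adj q r)
    (ers : G.Adj r s)
    (est : G.Adj s t)
    (etp : G.Adj t p)
    (nap : ¬ G.Adj a p)
    (naq : ¬ G.Adj a q)
    (nar : ¬ G.Adj a r)
    (nas : ¬ G.Adj a s)
    (nat : ¬ G.Adj a t)
    (npr : ¬ G.Adj p r)
    (nps : ¬ G.Adj p s)
    (nqs : ¬ G.Adj q s)
    (nqt : ¬ G.Adj q t)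
    (nrt : ¬ G.Adj r t)
    : False := by
  have eqp := epq.symm
  have nepq := G.ne_of_adj epq
  have neqp := G.ne_of_adj eqp
  have erq := eqr.symm
  have neqr := G.ne_of_adj eqr
  have nerq := G.ne_of_adj erq
  have esr := ers.symm
  have ners := G.ne_of_adj ers
  have nesr := G.ne_of_adj esr
  have ets := est.symm
  have nest := G.ne_of_adj est
  have nets := G.ne_of_adj ets
  have ept := etp.symm
  have netp := G.ne_of_adj etp
  have nept := G.ne_of_adj ept
  have npa : ¬ G.Adj p a := fun hh => nap hh.symm
  have nqa : ¬ G.Adj q a := fun hh => naq hh.symm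
  have nra : ¬ G.Adj r a := fun hh => nar hh.symm
  have nsa : ¬ G.Adj s a := fun hh => nas hh.symm
  have nta : ¬ G.Adj t a := fun hh => nat hh.symm
  have nrp : ¬ G.Adj r p := fun hh => npr hh.symm
  have nsp : ¬ G.Adj s p := fun hh => nps hh.symm
  have nsq : ¬ G.Adj s q := fun hh => nqs hh.symm
  have ntq : ¬ G.Adj t q := fun hh => nqt hh.symm
  have ntr : ¬ G.Adj t r := fun hh => nrt hh.symm
  have nepa := neap.symm
  have neqa := neaq.symm
  have nera := near.symm
  have nesa := neas.symm
  have neta := neat.symm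
  have nerp := nepr.symm
  have nesp := neps.symm
  have nesq := neqs.symm
  have netq := neqt.symm
  have netr := nert.symm
  apply h
  refine ⟨⟨⟨![a,p,q,r,s,t], ?_⟩, ?_⟩⟩
  · intro i j hij
    fin_cases i <;> fin_cases j <;> simp_all [mv0, mv1, mv2, mv3, mv4, mv5]
  · intro i j
    change G.Adj (![a,p,q,r,s,t] i) (![a,p,q,r,s,t] j) ↔ _
    fin_cases i <;> fin_cases j <;>
      simp_all [mv0, mv1, mv2, mv3, mv4, mv5, K1plusC5, SimpleGraph.fromRel_adj]

lemma noC6 {V : Type*} {G : SimpleGraph V} (h : ¬ Nonempty (C6 ↪g G))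
    (p q r s t u : V)
    (nepr : p ≠ r)
    (neps : p ≠ s)
    (nept : p ≠ t)
    (neqs : q ≠ s)
    (neqt : q ≠ t)
    (nequ : q ≠ u)
    (nert : r ≠ t)
    (neru : r ≠ u)
    (nesu : s ≠ u)
    (epq : G.Adj p q)
    (eqr : G.Adj q r)
    (ers : G.Adj r s)
    (est : G.Adj s t)
    (etu : G.Adj t u)
    (eup : G.Adj u p)
    (npr : ¬ G.Adj p r)
    (nps : ¬ G.Adj p s)
    (npt : ¬ G.Adj p t)
    (nqs : ¬ G.Adj q s)
    (nqt : ¬ G.Adj q t)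
    (nqu : ¬ G.Adj q u)
    (nrt : ¬ G.Adj r t)
    (nru : ¬ G.Adj r u)
    (nsu : ¬ G.Adj s u)
    : False := by
  have eqp := epq.symm
  have nepq := G.ne_of_adj epq
  have neqp := G.ne_of_adj eqp
  have erq := eqr.symm
  have neqr := G.ne_of_adj eqr
  have nerq := G.ne_of_adj erq
  have esr := ers.symm
  have ners := G.ne_of_adj ers
  have nesr := G.ne_of_adj esr
  have ets := est.symm
  have nest := G.ne_of_adj est
  have nets := G.ne_of_adj ets
  have eut := etu.symm
  have netu := G.ne_of_adj etu
  have neut := G.ne_of_adj eut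
  have epu := eup.symm
  have neup := G.ne_of_adj eup
  have nepu := G.ne_of_adj epu
  have nrp : ¬ G.Adj r p := fun hh => npr hh.symm
  have nerp := nepr.symm
  have nsp : ¬ G.Adj s p := fun hh => nps hh.symm
  have nesp := neps.symm
  have ntp : ¬ G.Adj t p := fun hh => npt hh.symm
  have netp := nept.symm
  have nsq : ¬ G.Adj s q := fun hh => nqs hh.symm
  have nesq := neqs.symm
  have ntq : ¬ G.Adj t q := fun hh => nqt hh.symm
  have netq := neqt.symm
  have nuq : ¬ G.Adj u q := fun hh => nqu hh.symm
  have neuq := nequ.symm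
  have ntr : ¬ G.Adj t r := fun hh => nrt hh.symm
  have netr := nert.symm
  have nur : ¬ G.Adj u r := fun hh => nru hh.symm
  have neur := neru.symm
  have nus : ¬ G.Adj u s := fun hh => nsu hh.symm
  have neus := nesu.symm
  apply h
  have emb : C6fin ↪g G := by
    refine ⟨⟨![p,q,r,s,t,u], ?_⟩, ?_⟩
    · intro i j hij
      fin_cases i <;> fin_cases j <;> simp_all [mv0, mv1, mv2, mv3, mv4, mv5]
    · intro i j
      change G.Adj (![p,q,r,s,t,u] i) (![p,q,r,s,t,u] j) ↔ _
      fin_cases i <;> fin_cases j <;>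
        simp_all [mv0, mv1, mv2, mv3, mv4, mv5, C6fin, SimpleGraph.fromRel_adj]
  exact ⟨emb.comp c6Iso.toRelEmbedding⟩



lemma addVertex_adj_some {V : Type*} (G : SimpleGraph V) (I : Set V) (x y : V) :
    (addVertex G I).Adj (some x) (some y) ↔ G.Adj x y := by
  simp only [addVertex, SimpleGraph.fromRel_adj]
  constructor
  · rintro ⟨hne, (⟨a, b, ha, hb, h⟩ | ⟨h, _⟩) | (⟨a, b, ha, hb, h⟩ | ⟨h, _⟩)⟩
    · cases ha; cases hb; exact h
    · exact absurd h (by simp)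
    · cases ha; cases hb; exact h.symm
    · exact absurd h (by simp)
  · intro h
    exact ⟨by simpa using G.ne_of_adj h, Or.inl (Or.inl ⟨x, y, rfl, rfl, h⟩)⟩

lemma addVertex_adj_none {V : Type*} (G : SimpleGraph V) (I : Set V) (x : V) :
    (addVertex G I).Adj none (some x) ↔ x ∈ I := by
  simp only [addVertex, SimpleGraph.fromRel_adj]
  constructor
  · rintro ⟨hne, (⟨a, b, ha, hb, h⟩ | ⟨h, y, hy, hxy⟩) | (⟨a, b, ha, hb, h⟩ | ⟨h, _⟩)⟩
    · exact absurd ha (by simp)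
    · cases hxy; exact hy
    · exact absurd hb (by simp)
    · exact absurd h (by simp)
  · intro h
    exact ⟨by simp, Or.inl (Or.inr ⟨trivial, x, h, rfl⟩)⟩

lemma maximal_indep_neighbor {V : Type*} {G : SimpleGraph V} {I : Set V}
    (hind : IsIndep G I)
    (hmax : ∀ J : Set V, IsIndep G J → I ⊆ J → J = I) (v : V) (hv : v ∉ I) :
    ∃ x ∈ I, G.Adj x v := by
  by_contra hcon
  push_neg at hcon
  have : IsIndep G (insert v I) := by
    rintro x (rfl | hx) y (rfl | hy)
    · exact G.irrefl
    · exact fun h => hcon y hy h.symm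
    · exact hcon x hx
    · exact hind x hx y hy
  have := hmax _ this (Set.subset_insert v I)
  exact hv (this ▸ Set.mem_insert v I)

lemma triangle_free {V : Type*} {G : SimpleGraph V} (hK3 : G.CliqueFree 3)
    (x y z : V) (h1 : G.Adj x y) (h2 : G.Adj x z) (h3 : G.Adj y z) : False := by
  classical
  exact hK3 ({x, y, z} : Finset V) (SimpleGraph.is3Clique_triple_iff.mpr ⟨h1, h2, h3⟩)

section Core

variable {V : Type*} {G : SimpleGraph V} {I : Set V}

/-- Core lemma for the case where the added vertex plays the role of an endpoint of an
edge of `K₁+2K₂`, with a crossing choice already made (`x ∈ I` adjacent to `a` and `d`). -/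
lemma core_b_aux (hK3 : G.CliqueFree 3)
    (h2K2 : ¬ Nonempty (K1plus2K2 ↪g G)) (hC5 : ¬ Nonempty (K1plusC5 ↪g G))
    (hind : IsIndep G I)
    (hmax : ∀ J : Set V, IsIndep G J → I ⊆ J → J = I)
    (a c d e x : V) (hcI : c ∈ I) (haI : a ∉ I) (hdI : d ∉ I) (heI : e ∉ I) (hxI : x ∈ I)
    (hde : G.Adj d e) (hxa : G.Adj x a) (hxd2 : G.Adj x d)
    (nac : ¬ G.Adj a c) (nad : ¬ G.Adj a d) (nae : ¬ G.Adj a e)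
    (ncd : ¬ G.Adj c d) (nce : ¬ G.Adj c e)
    (hac : a ≠ c) (had : a ≠ d) (hae : a ≠ e) (hcd : c ≠ d) (hce : c ≠ e) : False := by
  have nxc : ¬ G.Adj x c := hind x hxI c hcI
  have hxc : x ≠ c := fun h => nac (by rw [h] at hxa; exact hxa.symm)
  have hxd : x ≠ d := fun h => hdI (by rw [← h]; exact hxI)
  have hxe : x ≠ e := fun h => heI (by rw [← h]; exact hxI)
  have hxa' : x ≠ a := G.ne_of_adj hxa
  have nxe : ¬ G.Adj x e := fun h => triangle_free hK3 x d e hxd2 h hde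
  obtain ⟨z, hzI, hze⟩ := maximal_indep_neighbor hind hmax e heI
  have nzd : ¬ G.Adj z d := fun h => triangle_free hK3 z d e h hze hde
  have nzx : ¬ G.Adj z x := hind z hzI x hxI
  have nzc : ¬ G.Adj z c := hind z hzI c hcI
  have hzx : z ≠ x := fun h => nxe (by rw [← h]; exact hze)
  have hzc : z ≠ c := fun h => nce (by rw [← h]; exact hze)
  have hzd : z ≠ d := fun h => hdI (by rw [← h]; exact hzI)
  have hza' : a ≠ z := fun h => haI (by rw [h]; exact hzI)
  by_cases hza : G.Adj z a
  · -- K1plusC5 : c isolated, cycle a-x-d-e-z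
    exact noK1C5 hC5 c a x d e z
      hac.symm hxc.symm hcd hce hzc.symm had hae hxe hzx.symm hzd.symm
      hxa.symm hxd2 hde hze.symm hza
      (fun h => nac h.symm) (fun h => nxc h.symm) ncd nce (fun h => nzc h.symm)
      nad nae nxe (fun h => nzx h.symm) (fun h => nzd h.symm)
  · -- K1plus2K2 : c isolated, edges a-x and e-z
    exact no2K2 h2K2 c a x e z
      hac.symm hxc.symm hce hzc.symm hae hza' hxe hzx.symm
      hxa.symm hze.symm
      (fun h => nac h.symm) (fun h => nxc h.symm) nce (fun h => nzc h.symm)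
      nae (fun h => hza h.symm) nxe (fun h => nzx h.symm)

/-- Core lemma for the case where the added vertex is an endpoint of an edge of `K₁+2K₂`. -/
lemma core_b (hK3 : G.CliqueFree 3)
    (h2K2 : ¬ Nonempty (K1plus2K2 ↪g G)) (hC5 : ¬ Nonempty (K1plusC5 ↪g G))
    (hind : IsIndep G I)
    (hmax : ∀ J : Set V, IsIndep G J → I ⊆ J → J = I)
    (a c d e : V) (hcI : c ∈ I) (haI : a ∉ I) (hdI : d ∉ I) (heI : e ∉ I)
    (hde : G.Adj d e)
    (nac : ¬ G.Adj a c) (nad : ¬ G.Adj a d) (nae : ¬ G.Adj a e)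
    (ncd : ¬ G.Adj c d) (nce : ¬ G.Adj c e)
    (hac : a ≠ c) (had : a ≠ d) (hae : a ≠ e) (hcd : c ≠ d) (hce : c ≠ e) : False := by
  obtain ⟨x, hxI, hxa⟩ := maximal_indep_neighbor hind hmax a haI
  by_cases hxd2 : G.Adj x d
  · exact core_b_aux hK3 h2K2 hC5 hind hmax a c d e x hcI haI hdI heI hxI hde hxa hxd2
      nac nad nae ncd nce hac had hae hcd hce
  by_cases hxe2 : G.Adj x e
  · exact core_b_aux hK3 h2K2 hC5 hind hmax a c e d x hcI haI heI hdI hxI hde.symm hxa hxe2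
      nac nae nad nce ncd hac hae had hce hcd
  · -- K1plus2K2 : c isolated, edges x-a and d-e
    have nxc : ¬ G.Adj x c := hind x hxI c hcI
    have hxc : x ≠ c := fun h => nac (by rw [h] at hxa; exact hxa.symm)
    have hxd : x ≠ d := fun h => hdI (by rw [← h]; exact hxI)
    have hxe : x ≠ e := fun h => heI (by rw [← h]; exact hxI)
    exact no2K2 h2K2 c x a d e
      hxc.symm hac.symm hcd hce hxd hxe had hae
      hxa hde
      (fun h => nxc h.symm) (fun h => nac h.symm) ncd nce
      hxd2 hxe2 nad nae

end Core

section CoreA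

variable {V : Type*} {G : SimpleGraph V} {I : Set V}

/-- Core lemma for the isolated-vertex case when a crossing vertex `x ∈ I`
adjacent to `b` and `d` exists. -/
lemma core_a_cross (hK3 : G.CliqueFree 3)
    (h2K2 : ¬ Nonempty (K1plus2K2 ↪g G)) (hC5 : ¬ Nonempty (K1plusC5 ↪g G))
    (hC6 : ¬ Nonempty (C6 ↪g G))
    (hind : IsIndep G I)
    (hmax : ∀ J : Set V, IsIndep G J → I ⊆ J → J = I)
    (b c d e x : V) (hbI : b ∉ I) (hcI : c ∉ I) (hdI : d ∉ I) (heI : e ∉ I) (hxI : x ∈ I)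
    (hbc : G.Adj b c) (hde : G.Adj d e) (hxb : G.Adj x b) (hxd : G.Adj x d)
    (nbd : ¬ G.Adj b d) (nbe : ¬ G.Adj b e) (ncd : ¬ G.Adj c d) (nce : ¬ G.Adj c e)
    (hbd : b ≠ d) (hbe : b ≠ e) (hcd : c ≠ d) (hce : c ≠ e) : False := by
  have nxc : ¬ G.Adj x c := fun h => triangle_free hK3 x b c hxb h hbc
  have nxe : ¬ G.Adj x e := fun h => triangle_free hK3 x d e hxd h hde
  have hxb' : x ≠ b := fun h => hbI (by rw [← h]; exact hxI)
  have hxc' : x ≠ c := fun h => hcI (by rw [← h]; exact hxI)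
  have hxd' : x ≠ d := fun h => hdI (by rw [← h]; exact hxI)
  have hxe' : x ≠ e := fun h => heI (by rw [← h]; exact hxI)
  obtain ⟨u, huI, huc⟩ := maximal_indep_neighbor hind hmax c hcI
  have nub : ¬ G.Adj u b := fun h => triangle_free hK3 u b c h huc hbc
  have nxu : ¬ G.Adj x u := hind x hxI u huI
  have hub' : u ≠ b := fun h => hbI (by rw [← h]; exact huI)
  have huc'' : u ≠ c := G.ne_of_adj huc
  have hud' : u ≠ d := fun h => hdI (by rw [← h]; exact huI)
  have hue' : u ≠ e := fun h => heI (by rw [← h]; exact huI)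
  have hxu' : x ≠ u := fun h => nxc (by rw [h]; exact huc)
  by_cases hue : G.Adj u e
  · -- C6 : x-b-c-u-e-d
    have nud : ¬ G.Adj u d := fun h => triangle_free hK3 u d e h hue hde
    exact noC6 hC6 x b c u e d
      hxc' hxu' hxe' hub'.symm hbe hbd hce hcd hud'
      hxb hbc huc.symm hue hde.symm hxd.symm
      nxc nxu nxe (fun h => nub h.symm) nbe nbd nce ncd nud
  by_cases hud : G.Adj u d
  · -- C5 x-b-c-u-d, plus a neighbor w of e in I
    obtain ⟨w, hwI, hwe⟩ := maximal_indep_neighbor hind hmax e heI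
    have nwd : ¬ G.Adj w d := fun h => triangle_free hK3 w d e h hwe hde
    have nwx : ¬ G.Adj w x := hind w hwI x hxI
    have nwu : ¬ G.Adj w u := hind w hwI u huI
    have hwx' : w ≠ x := fun h => nxe (by rw [← h]; exact hwe)
    have hwu' : w ≠ u := fun h => hue (by rw [← h]; exact hwe)
    have hwb' : w ≠ b := fun h => hbI (by rw [← h]; exact hwI)
    have hwc' : w ≠ c := fun h => hcI (by rw [← h]; exact hwI)
    have hwd' : w ≠ d := fun h => hdI (by rw [← h]; exact hwI)
    have hwe'' : w ≠ e := G.ne_of_adj hwe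
    by_cases hwb : G.Adj w b
    · -- C6 : w-b-c-u-d-e
      have nwc : ¬ G.Adj w c := fun h => triangle_free hK3 w b c hwb h hbc
      exact noC6 hC6 w b c u d e
        hwc' hwu' hwd' hub'.symm hbd hbe hcd hce hue'
        hwb hbc huc.symm hud hde hwe.symm
        nwc nwu nwd (fun h => nub h.symm) nbd nbe ncd nce hue
    by_cases hwc : G.Adj w c
    · -- C6 : w-c-b-x-d-e
      exact noC6 hC6 w c b x d e
        hwb' hwx' hwd' hxc'.symm hcd hce hbd hbe hxe'
        hwc hbc.symm hxb.symm hxd hde hwe.symm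
        hwb nwx nwd (fun h => nxc h.symm) ncd nce nbd nbe nxe
    · -- K1plusC5 : w isolated, cycle x-b-c-u-d
      exact noK1C5 hC5 w x b c u d
        hwx' hwb' hwc' hwu' hwd' hxc' hxu' hub'.symm hbd hcd
        hxb hbc huc.symm hud hxd.symm
        nwx hwb hwc nwu nwd
        nxc nxu (fun h => nub h.symm) nbd ncd
  · -- u adjacent to neither d nor e
    obtain ⟨w, hwI, hwe⟩ := maximal_indep_neighbor hind hmax e heI
    have nwd : ¬ G.Adj w d := fun h => triangle_free hK3 w d e h hwe hde
    have nwx : ¬ G.Adj w x := hind w hwI x hxI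
    have nwu : ¬ G.Adj w u := hind w hwI u huI
    have nuw : ¬ G.Adj u w := fun h => nwu h.symm
    have nux : ¬ G.Adj u x := fun h => nxu h.symm
    have hwx' : w ≠ x := fun h => nxe (by rw [← h]; exact hwe)
    have hwu' : w ≠ u := fun h => hue (by rw [← h]; exact hwe)
    have hwb' : w ≠ b := fun h => hbI (by rw [← h]; exact hwI)
    have hwc' : w ≠ c := fun h => hcI (by rw [← h]; exact hwI)
    have hwd' : w ≠ d := fun h => hdI (by rw [← h]; exact hwI)
    by_cases hwb : G.Adj w b
    · -- K1plusC5 : u isolated, cycle w-b-x-d-e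
      exact noK1C5 hC5 u w b x d e
        hwu'.symm hub' hxu'.symm hud' hue' hwx' hwd' hbd hbe hxe'
        hwb hxb.symm hxd hde hwe.symm
        nuw nub nux hud hue
        nwx nwd nbd nbe nxe
    by_cases hwc : G.Adj w c
    · -- C6 : w-c-b-x-d-e
      exact noC6 hC6 w c b x d e
        hwb' hwx' hwd' hxc'.symm hcd hce hbd hbe hxe'
        hwc hbc.symm hxb.symm hxd hde hwe.symm
        hwb nwx nwd (fun h => nxc h.symm) ncd nce nbd nbe nxe
    · -- K1plus2K2 : w isolated, edges u-c and x-d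
      exact no2K2 h2K2 w u c x d
        hwu' hwc' hwx' hwd' hxu'.symm hud' hxc'.symm hcd
        huc hxd
        nwu hwc nwx nwd nux hud (fun h => nxc h.symm) ncd

end CoreA

section CoreA2

variable {V : Type*} {G : SimpleGraph V} {I : Set V}

/-- Core lemma for the case where the added vertex is the isolated vertex of `K₁+2K₂`. -/
lemma core_a (hK3 : G.CliqueFree 3)
    (h2K2 : ¬ Nonempty (K1plus2K2 ↪g G)) (hC5 : ¬ Nonempty (K1plusC5 ↪g G))
    (hC6 : ¬ Nonempty (C6 ↪g G))
    (hind : IsIndep G I)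
    (hmax : ∀ J : Set V, IsIndep G J → I ⊆ J → J = I)
    (b c d e : V) (hbI : b ∉ I) (hcI : c ∉ I) (hdI : d ∉ I) (heI : e ∉ I)
    (hbc : G.Adj b c) (hde : G.Adj d e)
    (nbd : ¬ G.Adj b d) (nbe : ¬ G.Adj b e) (ncd : ¬ G.Adj c d) (nce : ¬ G.Adj c e)
    (hbd : b ≠ d) (hbe : b ≠ e) (hcd : c ≠ d) (hce : c ≠ e) : False := by
  by_cases hcross : ∃ z ∈ I, (G.Adj z b ∨ G.Adj z c) ∧ (G.Adj z d ∨ G.Adj z e)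
  · obtain ⟨z, hzI, hz1 | hz1, hz2 | hz2⟩ := hcross
    · exact core_a_cross hK3 h2K2 hC5 hC6 hind hmax b c d e z hbI hcI hdI heI hzI
        hbc hde hz1 hz2 nbd nbe ncd nce hbd hbe hcd hce
    · exact core_a_cross hK3 h2K2 hC5 hC6 hind hmax b c e d z hbI hcI heI hdI hzI
        hbc hde.symm hz1 hz2 nbe nbd nce ncd hbe hbd hce hcd
    · exact core_a_cross hK3 h2K2 hC5 hC6 hind hmax c b d e z hcI hbI hdI heI hzI
        hbc.symm hde hz1 hz2 ncd nce nbd nbe hcd hce hbd hbe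
    · exact core_a_cross hK3 h2K2 hC5 hC6 hind hmax c b e d z hcI hbI heI hdI hzI
        hbc.symm hde.symm hz1 hz2 nce ncd nbe nbd hce hcd hbe hbd
  · push_neg at hcross
    obtain ⟨x, hxI, hxb⟩ := maximal_indep_neighbor hind hmax b hbI
    obtain ⟨u, huI, huc⟩ := maximal_indep_neighbor hind hmax c hcI
    obtain ⟨nxd, nxe⟩ := hcross x hxI (Or.inl hxb)
    obtain ⟨nud, nue⟩ := hcross u huI (Or.inr huc)
    have nxc : ¬ G.Adj x c := fun h => triangle_free hK3 x b c hxb h hbc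
    have nxu : ¬ G.Adj x u := hind x hxI u huI
    have hxu' : x ≠ u := fun h => nxc (by rw [h]; exact huc)
    have hxc' : x ≠ c := fun h => hcI (by rw [← h]; exact hxI)
    have hxd' : x ≠ d := fun h => hdI (by rw [← h]; exact hxI)
    have hxe' : x ≠ e := fun h => heI (by rw [← h]; exact hxI)
    have hud' : u ≠ d := fun h => hdI (by rw [← h]; exact huI)
    have hue' : u ≠ e := fun h => heI (by rw [← h]; exact huI)
    exact no2K2 h2K2 x u c d e
      hxu' hxc' hxd' hxe' hud' hue' hcd hce
      huc hde
      nxu nxc nxd nxe nud nue ncd nce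

end CoreA2

theorem addVertex_K1plus2K2_free {V : Type*} [Fintype V] (G : SimpleGraph V) (I : Set V)
    (hK3 : G.CliqueFree 3)
    (hK1plus2K2 : ¬ Nonempty (K1plus2K2 ↪g G))
    (hK1plusC5 : ¬ Nonempty (K1plusC5 ↪g G))
    (hC6 : ¬ Nonempty (C6 ↪g G))
    (hind : IsIndep G I)
    (hmax : ∀ J : Set V, IsIndep G J → I ⊆ J → J = I) :
    ¬ Nonempty (K1plus2K2 ↪g addVertex G I) := by
  rintro ⟨f⟩
  classical
  have hpat : ∀ i j : Fin 5, K1plus2K2.Adj i j ↔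
      ((i = 1 ∧ j = 2) ∨ (i = 2 ∧ j = 1) ∨ (i = 3 ∧ j = 4) ∨ (i = 4 ∧ j = 3)) := by
    intro i j
    simp only [K1plus2K2, SimpleGraph.fromRel_adj]
    revert i j
    decide
  have hne : ∀ i j : Fin 5, i ≠ j → f i ≠ f j := fun i j hij h => hij (f.injective h)
  have hBC : (addVertex G I).Adj (f 1) (f 2) := f.map_rel_iff.mpr ((hpat 1 2).mpr (by decide))
  have hDE : (addVertex G I).Adj (f 3) (f 4) := f.map_rel_iff.mpr ((hpat 3 4).mpr (by decide))
  have hnadj : ∀ i j : Fin 5,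
      ¬ ((i = 1 ∧ j = 2) ∨ (i = 2 ∧ j = 1) ∨ (i = 3 ∧ j = 4) ∨ (i = 4 ∧ j = 3)) →
      ¬ (addVertex G I).Adj (f i) (f j) :=
    fun i j h h2 => h ((hpat i j).mp (f.map_rel_iff.mp h2))
  have nAB := hnadj 0 1 (by decide)
  have nAC := hnadj 0 2 (by decide)
  have nAD := hnadj 0 3 (by decide)
  have nAE := hnadj 0 4 (by decide)
  have nBD := hnadj 1 3 (by decide)
  have nBE := hnadj 1 4 (by decide)
  have nCD := hnadj 2 3 (by decide)
  have nCE := hnadj 2 4 (by decide)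
  rcases h0 : f 0 with _ | a
  · -- the added vertex is the isolated vertex
    obtain ⟨b, hb⟩ : ∃ v, f 1 = some v :=
      Option.ne_none_iff_exists'.mp (fun h => hne 1 0 (by decide) (h.trans h0.symm))
    obtain ⟨c, hc⟩ : ∃ v, f 2 = some v :=
      Option.ne_none_iff_exists'.mp (fun h => hne 2 0 (by decide) (h.trans h0.symm))
    obtain ⟨d, hd⟩ : ∃ v, f 3 = some v :=
      Option.ne_none_iff_exists'.mp (fun h => hne 3 0 (by decide) (h.trans h0.symm))
    obtain ⟨e, he⟩ : ∃ v, f 4 = some v :=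
      Option.ne_none_iff_exists'.mp (fun h => hne 4 0 (by decide) (h.trans h0.symm))
    rw [hb, hc] at hBC
    rw [hd, he] at hDE
    rw [h0, hb] at nAB
    rw [h0, hc] at nAC
    rw [h0, hd] at nAD
    rw [h0, he] at nAE
    rw [hb, hd] at nBD
    rw [hb, he] at nBE
    rw [hc, hd] at nCD
    rw [hc, he] at nCE
    exact core_a hK3 hK1plus2K2 hK1plusC5 hC6 hind hmax b c d e
      (fun h => nAB ((addVertex_adj_none G I b).mpr h))
      (fun h => nAC ((addVertex_adj_none G I c).mpr h))
      (fun h => nAD ((addVertex_adj_none G I d).mpr h))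
      (fun h => nAE ((addVertex_adj_none G I e).mpr h))
      ((addVertex_adj_some G I b c).mp hBC)
      ((addVertex_adj_some G I d e).mp hDE)
      (fun h => nBD ((addVertex_adj_some G I b d).mpr h))
      (fun h => nBE ((addVertex_adj_some G I b e).mpr h))
      (fun h => nCD ((addVertex_adj_some G I c d).mpr h))
      (fun h => nCE ((addVertex_adj_some G I c e).mpr h))
      (fun h => hne 1 3 (by decide) (by rw [hb, hd, h]))
      (fun h => hne 1 4 (by decide) (by rw [hb, he, h]))
      (fun h => hne 2 3 (by decide) (by rw [hc, hd, h]))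
      (fun h => hne 2 4 (by decide) (by rw [hc, he, h]))
  rcases h1 : f 1 with _ | b
  · -- the added vertex is vertex 1
    obtain ⟨c, hc⟩ : ∃ v, f 2 = some v :=
      Option.ne_none_iff_exists'.mp (fun h => hne 2 1 (by decide) (h.trans h1.symm))
    obtain ⟨d, hd⟩ : ∃ v, f 3 = some v :=
      Option.ne_none_iff_exists'.mp (fun h => hne 3 1 (by decide) (h.trans h1.symm))
    obtain ⟨e, he⟩ : ∃ v, f 4 = some v :=
      Option.ne_none_iff_exists'.mp (fun h => hne 4 1 (by decide) (h.trans h1.symm))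
    rw [h1, hc] at hBC
    rw [hd, he] at hDE
    rw [h0, h1] at nAB
    rw [h0, hc] at nAC
    rw [h0, hd] at nAD
    rw [h0, he] at nAE
    rw [h1, hd] at nBD
    rw [h1, he] at nBE
    rw [hc, hd] at nCD
    rw [hc, he] at nCE
    exact core_b hK3 hK1plus2K2 hK1plusC5 hind hmax a c d e
      ((addVertex_adj_none G I c).mp hBC)
      (fun h => nAB (((addVertex_adj_none G I a).mpr h).symm))
      (fun h => nBD ((addVertex_adj_none G I d).mpr h))
      (fun h => nBE ((addVertex_adj_none G I e).mpr h))
      ((addVertex_adj_some G I d e).mp hDE)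
      (fun h => nAC ((addVertex_adj_some G I a c).mpr h))
      (fun h => nAD ((addVertex_adj_some G I a d).mpr h))
      (fun h => nAE ((addVertex_adj_some G I a e).mpr h))
      (fun h => nCD ((addVertex_adj_some G I c d).mpr h))
      (fun h => nCE ((addVertex_adj_some G I c e).mpr h))
      (fun h => hne 0 2 (by decide) (by rw [h0, hc, h]))
      (fun h => hne 0 3 (by decide) (by rw [h0, hd, h]))
      (fun h => hne 0 4 (by decide) (by rw [h0, he, h]))
      (fun h => hne 2 3 (by decide) (by rw [hc, hd, h]))
      (fun h => hne 2 4 (by decide) (by rw [hc, he, h]))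
  rcases h2 : f 2 with _ | c
  · -- the added vertex is vertex 2
    obtain ⟨d, hd⟩ : ∃ v, f 3 = some v :=
      Option.ne_none_iff_exists'.mp (fun h => hne 3 2 (by decide) (h.trans h2.symm))
    obtain ⟨e, he⟩ : ∃ v, f 4 = some v :=
      Option.ne_none_iff_exists'.mp (fun h => hne 4 2 (by decide) (h.trans h2.symm))
    rw [h1, h2] at hBC
    rw [hd, he] at hDE
    rw [h0, h1] at nAB
    rw [h0, h2] at nAC
    rw [h0, hd] at nAD
    rw [h0, he] at nAE
    rw [h1, hd] at nBD
    rw [h1, he] at nBE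
    rw [h2, hd] at nCD
    rw [h2, he] at nCE
    exact core_b hK3 hK1plus2K2 hK1plusC5 hind hmax a b d e
      ((addVertex_adj_none G I b).mp hBC.symm)
      (fun h => nAC (((addVertex_adj_none G I a).mpr h).symm))
      (fun h => nCD ((addVertex_adj_none G I d).mpr h))
      (fun h => nCE ((addVertex_adj_none G I e).mpr h))
      ((addVertex_adj_some G I d e).mp hDE)
      (fun h => nAB ((addVertex_adj_some G I a b).mpr h))
      (fun h => nAD ((addVertex_adj_some G I a d).mpr h))
      (fun h => nAE ((addVertex_adj_some G I a e).mpr h))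
      (fun h => nBD ((addVertex_adj_some G I b d).mpr h))
      (fun h => nBE ((addVertex_adj_some G I b e).mpr h))
      (fun h => hne 0 1 (by decide) (by rw [h0, h1, h]))
      (fun h => hne 0 3 (by decide) (by rw [h0, hd, h]))
      (fun h => hne 0 4 (by decide) (by rw [h0, he, h]))
      (fun h => hne 1 3 (by decide) (by rw [h1, hd, h]))
      (fun h => hne 1 4 (by decide) (by rw [h1, he, h]))
  rcases h3 : f 3 with _ | d
  · -- the added vertex is vertex 3
    obtain ⟨e, he⟩ : ∃ v, f 4 = some v :=
      Option.ne_none_iff_exists'.mp (fun h => hne 4 3 (by decide) (h.trans h3.symm))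
    rw [h1, h2] at hBC
    rw [h3, he] at hDE
    rw [h0, h1] at nAB
    rw [h0, h2] at nAC
    rw [h0, h3] at nAD
    rw [h0, he] at nAE
    rw [h1, h3] at nBD
    rw [h1, he] at nBE
    rw [h2, h3] at nCD
    rw [h2, he] at nCE
    exact core_b hK3 hK1plus2K2 hK1plusC5 hind hmax a e b c
      ((addVertex_adj_none G I e).mp hDE)
      (fun h => nAD (((addVertex_adj_none G I a).mpr h).symm))
      (fun h => nBD (((addVertex_adj_none G I b).mpr h).symm))
      (fun h => nCD (((addVertex_adj_none G I c).mpr h).symm))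
      ((addVertex_adj_some G I b c).mp hBC)
      (fun h => nAE ((addVertex_adj_some G I a e).mpr h))
      (fun h => nAB ((addVertex_adj_some G I a b).mpr h))
      (fun h => nAC ((addVertex_adj_some G I a c).mpr h))
      (fun h => nBE ((addVertex_adj_some G I b e).mpr h.symm))
      (fun h => nCE ((addVertex_adj_some G I c e).mpr h.symm))
      (fun h => hne 0 4 (by decide) (by rw [h0, he, h]))
      (fun h => hne 0 1 (by decide) (by rw [h0, h1, h]))
      (fun h => hne 0 2 (by decide) (by rw [h0, h2, h]))
      (fun h => hne 4 1 (by decide) (by rw [he, h1, h]))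
      (fun h => hne 4 2 (by decide) (by rw [he, h2, h]))
  rcases h4 : f 4 with _ | e
  · -- the added vertex is vertex 4
    rw [h1, h2] at hBC
    rw [h3, h4] at hDE
    rw [h0, h1] at nAB
    rw [h0, h2] at nAC
    rw [h0, h3] at nAD
    rw [h0, h4] at nAE
    rw [h1, h3] at nBD
    rw [h1, h4] at nBE
    rw [h2, h3] at nCD
    rw [h2, h4] at nCE
    exact core_b hK3 hK1plus2K2 hK1plusC5 hind hmax a d b c
      ((addVertex_adj_none G I d).mp hDE.symm)
      (fun h => nAE (((addVertex_adj_none G I a).mpr h).symm))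
      (fun h => nBE (((addVertex_adj_none G I b).mpr h).symm))
      (fun h => nCE (((addVertex_adj_none G I c).mpr h).symm))
      ((addVertex_adj_some G I b c).mp hBC)
      (fun h => nAD ((addVertex_adj_some G I a d).mpr h))
      (fun h => nAB ((addVertex_adj_some G I a b).mpr h))
      (fun h => nAC ((addVertex_adj_some G I a c).mpr h))
      (fun h => nBD ((addVertex_adj_some G I b d).mpr h.symm))
      (fun h => nCD ((addVertex_adj_some G I c d).mpr h.symm))
      (fun h => hne 0 3 (by decide) (by rw [h0, h3, h]))
      (fun h => hne 0 1 (by decide) (by rw [h0, h1, h]))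
      (fun h => hne 0 2 (by decide) (by rw [h0, h2, h]))
      (fun h => hne 3 1 (by decide) (by rw [h3, h1, h]))
      (fun h => hne 3 2 (by decide) (by rw [h3, h2, h]))
  · -- no vertex maps to the added vertex: induced copy inside G
    rw [h1, h2] at hBC
    rw [h3, h4] at hDE
    rw [h0, h1] at nAB
    rw [h0, h2] at nAC
    rw [h0, h3] at nAD
    rw [h0, h4] at nAE
    rw [h1, h3] at nBD
    rw [h1, h4] at nBE
    rw [h2, h3] at nCD
    rw [h2, h4] at nCE
    exact no2K2 hK1plus2K2 a b c d e
      (fun h => hne 0 1 (by decide) (by rw [h0, h1, h]))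
      (fun h => hne 0 2 (by decide) (by rw [h0, h2, h]))
      (fun h => hne 0 3 (by decide) (by rw [h0, h3, h]))
      (fun h => hne 0 4 (by decide) (by rw [h0, h4, h]))
      (fun h => hne 1 3 (by decide) (by rw [h1, h3, h]))
      (fun h => hne 1 4 (by decide) (by rw [h1, h4, h]))
      (fun h => hne 2 3 (by decide) (by rw [h2, h3, h]))
      (fun h => hne 2 4 (by decide) (by rw [h2, h4, h]))
      ((addVertex_adj_some G I b c).mp hBC)
      ((addVertex_adj_some G I d e).mp hDE)
      (fun h => nAB ((addVertex_adj_some G I a b).mpr h))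
      (fun h => nAC ((addVertex_adj_some G I a c).mpr h))
      (fun h => nAD ((addVertex_adj_some G I a d).mpr h))
      (fun h => nAE ((addVertex_adj_some G I a e).mpr h))
      (fun h => nBD ((addVertex_adj_some G I b d).mpr h))
      (fun h => nBE ((addVertex_adj_some G I b e).mpr h))
      (fun h => nCD ((addVertex_adj_some G I c d).mpr h))
      (fun h => nCE ((addVertex_adj_some G I c e).mpr h))
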